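/- arXiv:1912.09208 — 4 statements merged into one kernel-verified Lean document; each statement's English description precedes it below -/
import Mathlib

section
/- Let M ≥ 1 and let Δt > 0 and cell widths Δx_j > 0 for j ∈ ℤ be given, with λ_j := Δt/Δx_j. For each m ∈ {1,…,M} and j ∈ ℤ let u_{m,j+1/2} ∈ ℝ and c_{m,j} ≥ 0 be given real numbers, define the upwind flux F_{m,j+1/2} := u⁺_{m,j+1/2} c_{m,j} − u⁻_{m,j+1/2} c_{m,j+1}, and define the forward-Euler update c'_{m,j} := c_{m,j} − λ_j (F_{m,j+1/2} − F_{m,j−1/2}). Suppose U ≥ 0 satisfies u⁺_{m,j+1/2} ≤ U and u⁻_{m,j−1/2} ≤ U for all m and j, and the CFL condition 2·Δt·U ≤ Δx_j holds for every j. Then c'_{m,j} ≥ 0 for all m ∈ {1,…,M} and all j ∈ ℤ. -/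
/-- Positivity preservation (Theorem 3.1) for the 1D first-order upwind finite volume
scheme with forward Euler time stepping. Here `u m j` denotes `u_{m,j+1/2}` and
`c m j` the cell average `c_{m,j}`; `max w 0` and `max (-w) 0` are the positive and
negative parts of `w`. -/
theorem positivity_preserving_1d
    (M : ℕ) (hM : 1 ≤ M) (Δt : ℝ) (hΔt : 0 < Δt)
    (Δx : ℤ → ℝ) (hΔx : ∀ j, 0 < Δx j)
    (u c : Fin M → ℤ → ℝ) (hc : ∀ m j, 0 ≤ c m j)
    (U : ℝ) (hU : 0 ≤ U)
    (hUp : ∀ m j, max (u m j) 0 ≤ U)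
    (hUm : ∀ m j, max (-(u m (j - 1))) 0 ≤ U)
    (hCFL : ∀ j, 2 * Δt * U ≤ Δx j) :
    ∀ m j, 0 ≤ c m j - (Δt / Δx j) *
      ((max (u m j) 0 * c m j - max (-(u m j)) 0 * c m (j + 1))
        - (max (u m (j - 1)) 0 * c m (j - 1) - max (-(u m (j - 1))) 0 * c m j)) := by
  intro m j
  have hx := hΔx j
  have hlam : 0 ≤ Δt / Δx j := le_of_lt (div_pos hΔt hx)
  have h1 : (Δt / Δx j) * (max (u m j) 0 + max (-(u m (j - 1))) 0) ≤ 1 := by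
    rw [div_mul_eq_mul_div, div_le_one hx]
    have := hCFL j
    nlinarith [hUp m j, hUm m j]
  have hp : 0 ≤ max (u m j) 0 := le_max_right _ _
  have hq : 0 ≤ max (-(u m j)) 0 := le_max_right _ _
  have hr : 0 ≤ max (u m (j - 1)) 0 := le_max_right _ _
  have hs : 0 ≤ max (-(u m (j - 1))) 0 := le_max_right _ _
  nlinarith [hc m j, hc m (j+1), hc m (j-1),
    mul_nonneg (mul_nonneg hlam hq) (hc m (j+1)),
    mul_nonneg (mul_nonneg hlam hr) (hc m (j-1)),
    mul_nonneg (hc m j) (sub_nonneg.2 h1),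
    mul_le_mul_of_nonneg_left h1 (hc m j)]
end

section
/- Let M ≥ 1, Δt > 0, and cell widths Δx_j > 0 and Δy_k > 0 for j,k ∈ ℤ with λ^x_j := Δt/Δx_j and λ^y_k := Δt/Δy_k. For each m ∈ {1,…,M} and j,k ∈ ℤ let u_{m,j+1/2,k} ∈ ℝ, v_{m,j,k+1/2} ∈ ℝ, and c_{m,j,k} ≥ 0 be given. Define fluxes F^x_{m,j+1/2,k} := u⁺_{m,j+1/2,k} c_{m,j,k} − u⁻_{m,j+1/2,k} c_{m,j+1,k} and F^y_{m,j,k+1/2} := v⁺_{m,j,k+1/2} c_{m,j,k} − v⁻_{m,j,k+1/2} c_{m,j,k+1}, and the forward-Euler update c'_{m,j,k} := c_{m,j,k} − λ^x_j (F^x_{m,j+1/2,k} − F^x_{m,j−1/2,k}) − λ^y_k (F^y_{m,j,k+1/2} − F^y_{m,j,k−1/2}). Suppose U ≥ 0 and V ≥ 0 satisfy u⁺_{m,j+1/2,k} ≤ U, u⁻_{m,j−1/2,k} ≤ U, v⁺_{m,j,k+1/2} ≤ V, v⁻_{m,j,k−1/2} ≤ V for all m,j,k, and the CFL conditions 4·Δt·U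 ≤ Δx_j and 4·Δt·V ≤ Δy_k hold for all j,k. Then c'_{m,j,k} ≥ 0 for all m ∈ {1,…,M} and all j,k ∈ ℤ. -/
/-- Positivity preservation (Theorem 3.3) for the 2D first-order upwind finite volume
scheme with forward Euler time stepping. Here `u m j k` denotes `u_{m,j+1/2,k}`,
`v m j k` denotes `v_{m,j,k+1/2}`, and `c m j k` the cell average `c_{m,j,k}`;
`max w 0` and `max (-w) 0` are the positive and negative parts of `w`. -/
theorem positivity_preserving_2d
    (M : ℕ) (hM : 1 ≤ M) (Δt : ℝ) (hΔt : 0 < Δt)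
    (Δx Δy : ℤ → ℝ) (hΔx : ∀ j, 0 < Δx j) (hΔy : ∀ k, 0 < Δy k)
    (u v : Fin M → ℤ → ℤ → ℝ) (c : Fin M → ℤ → ℤ → ℝ)
    (hc : ∀ m j k, 0 ≤ c m j k)
    (U V : ℝ) (hU : 0 ≤ U) (hV : 0 ≤ V)
    (hUp : ∀ m j k, max (u m j k) 0 ≤ U)
    (hUm : ∀ m j k, max (-(u m (j - 1) k)) 0 ≤ U)
    (hVp : ∀ m j k, max (v m j k) 0 ≤ V)
    (hVm : ∀ m j k, max (-(v m j (k - 1))) 0 ≤ V)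
    (hCFLx : ∀ j, 4 * Δt * U ≤ Δx j) (hCFLy : ∀ k, 4 * Δt * V ≤ Δy k) :
    ∀ m j k, 0 ≤ c m j k
      - (Δt / Δx j) *
        ((max (u m j k) 0 * c m j k - max (-(u m j k)) 0 * c m (j + 1) k)
          - (max (u m (j - 1) k) 0 * c m (j - 1) k - max (-(u m (j - 1) k)) 0 * c m j k))
      - (Δt / Δy k) *
        ((max (v m j k) 0 * c m j k - max (-(v m j k)) 0 * c m j (k + 1))
          - (max (v m j (k - 1)) 0 * c m j (k - 1) - max (-(v m j (k - 1))) 0 * c m j k)) := by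
  intro m j k
  set a := max (u m j k) 0 with ha
  set b := max (-(u m j k)) 0 with hb
  set a' := max (u m (j - 1) k) 0 with ha'
  set b' := max (-(u m (j - 1) k)) 0 with hb'
  set A := max (v m j k) 0 with hA
  set B := max (-(v m j k)) 0 with hB
  set A' := max (v m j (k - 1)) 0 with hA'
  set B' := max (-(v m j (k - 1))) 0 with hB'
  have hxpos := hΔx j
  have hypos := hΔy k
  have lx : (0:ℝ) ≤ Δt / Δx j := le_of_lt (div_pos hΔt hxpos)
  have ly : (0:ℝ) ≤ Δt / Δy k := le_of_lt (div_pos hΔt hypos)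
  have h1 : Δt / Δx j * (a + b') ≤ 1 / 2 := by
    rw [div_mul_eq_mul_div, div_le_div_iff₀ hxpos two_pos]
    have := hCFLx j
    nlinarith [hUp m j k, hUm m j k, hΔt.le, le_max_right (u m j k) 0,
      le_max_right (-(u m (j-1) k)) 0]
  have h2 : Δt / Δy k * (A + B') ≤ 1 / 2 := by
    rw [div_mul_eq_mul_div, div_le_div_iff₀ hypos two_pos]
    have := hCFLy k
    nlinarith [hVp m j k, hVm m j k, hΔt.le, le_max_right (v m j k) 0,
      le_max_right (-(v m j (k-1))) 0]
  have hb0 : (0:ℝ) ≤ b := le_max_right _ _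
  have ha'0 : (0:ℝ) ≤ a' := le_max_right _ _
  have hB0 : (0:ℝ) ≤ B := le_max_right _ _
  have hA'0 : (0:ℝ) ≤ A' := le_max_right _ _
  have t1 : 0 ≤ Δt / Δx j * (b * c m (j + 1) k) :=
    mul_nonneg lx (mul_nonneg hb0 (hc m (j+1) k))
  have t2 : 0 ≤ Δt / Δx j * (a' * c m (j - 1) k) :=
    mul_nonneg lx (mul_nonneg ha'0 (hc m (j-1) k))
  have t3 : 0 ≤ Δt / Δy k * (B * c m j (k + 1)) :=
    mul_nonneg ly (mul_nonneg hB0 (hc m j (k+1)))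
  have t4 : 0 ≤ Δt / Δy k * (A' * c m j (k - 1)) :=
    mul_nonneg ly (mul_nonneg hA'0 (hc m j (k-1)))
  have hcn := hc m j k
  nlinarith [mul_nonneg (sub_nonneg.2 (by linarith : Δt / Δx j * (a + b') + Δt / Δy k * (A + B') ≤ 1)) hcn]
end

section
/- Let M ≥ 1, N ≥ 1, cell widths Δx_j > 0 for j ∈ {−N,…,N}, integer valences z_1,…,z_M, and symmetric discrete kernels K, W : ℤ → ℝ with K_n = K_{−n} and W_n = W_{−n} for all n. Suppose c_{m,j} : ℝ → (0,∞) is differentiable for each m ∈ {1,…,M} and j ∈ {−N,…,N}. Define ρ_j(t) := Σ_{m=1}^M z_m c_{m,j}(t), θ_j(t) := Σ_{m=1}^M c_{m,j}(t), the discrete chemical potential ψ_{m,j}(t) := 1 + log c_{m,j}(t) + Σ_{i=−N}^{N} Δx_i ( z_m K_{j−i} ρ_i(t) + W_{j−i} θ_i(t) ), and for j ∈ {−N,…,N−1} the discrete velocity u_{m,j+1/2}(t) := −(ψ_{m,j+1}(t) − ψ_{m,j}(t))/Δx_j and the upwind flux F_{m,j+1/2}(t) := u⁺_{m,j+1/2}(t)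 c_{m,j}(t) − u⁻_{m,j+1/2}(t) c_{m,j+1}(t), with the no-flux boundary convention F_{m,−N−1/2}(t) = F_{m,N+1/2}(t) = 0. Assume the semi-discrete scheme d/dt c_{m,j}(t) = −(F_{m,j+1/2}(t) − F_{m,j−1/2}(t))/Δx_j holds for all m, j, t. Define the discrete free energy E_Δ(t) := Σ_{m=1}^M Σ_{j=−N}^{N} Δx_j c_{m,j}(t) log c_{m,j}(t) + (1/2) Σ_{i=−N}^{N} Σ_{j=−N}^{N} Δx_j Δx_i ( K_{j−i} ρ_i(t) ρ_j(t) + W_{j−i} θ_i(t) θ_j(t) ) and the discrete dissipation D_Δ(t) := Σ_{m=1}^M Σ_{j=−N}^{N−1} Δx_j (u_{m,j+1/2}(t))² · min( c_{m,j}(t), c_{m,j+1}(t) ). Then E_Δ is differentiable and d/dt E_Δ(t) ≤ −D_Δ(t) ≤ 0 for all t. -/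
private lemma sum_shift_aux (a b : ℤ) (h : ℤ → ℝ) :
    ∑ j ∈ Finset.Icc a b, h (j - 1) = ∑ j ∈ Finset.Icc (a - 1) (b - 1), h j := by
  rw [show Finset.Icc a b = (Finset.Icc (a-1) (b-1)).map (addRightEmbedding 1) by
    rw [Finset.map_add_right_Icc]; ring_nf, Finset.sum_map]
  simp

private lemma sum_split_top (a b : ℤ) (h : a ≤ b) (f : ℤ → ℝ) :
    ∑ j ∈ Finset.Icc a b, f j = ∑ j ∈ Finset.Icc a (b-1), f j + f b := by
  rw [show Finset.Icc a b = insert b (Finset.Icc a (b-1)) by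
    ext x; simp [Finset.mem_Icc]; omega,
    Finset.sum_insert (by simp [Finset.mem_Icc])]
  ring

private lemma sum_split_bot (a b : ℤ) (h : a ≤ b + 1) (f : ℤ → ℝ) :
    ∑ j ∈ Finset.Icc (a-1) b, f j = f (a-1) + ∑ j ∈ Finset.Icc a b, f j := by
  rw [show Finset.Icc (a-1) b = insert (a-1) (Finset.Icc a b) by
    ext x; simp [Finset.mem_Icc]; omega,
    Finset.sum_insert (by simp)]

/-- Abel summation by parts with vanishing boundary terms. -/
private lemma abel_parts (a b : ℤ) (hab : a ≤ b) (f g : ℤ → ℝ)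
    (hga : g (a - 1) = 0) (hgb : g b = 0) :
    ∑ j ∈ Finset.Icc a b, f j * (g j - g (j - 1))
      = -∑ j ∈ Finset.Icc a (b - 1), g j * (f (j + 1) - f j) := by
  have h1 : ∑ j ∈ Finset.Icc a b, f j * (g j - g (j-1))
      = ∑ j ∈ Finset.Icc a b, f j * g j - ∑ j ∈ Finset.Icc a b, f j * g (j-1) := by
    rw [← Finset.sum_sub_distrib]; apply Finset.sum_congr rfl; intro j _; ring
  have h2 : ∑ j ∈ Finset.Icc a b, f j * g (j-1)
      = ∑ j ∈ Finset.Icc (a-1) (b-1), f (j+1) * g j := by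
    rw [← sum_shift_aux a b (fun j => f (j+1) * g j)]
    apply Finset.sum_congr rfl; intro j _; norm_num
  have h3 : ∑ j ∈ Finset.Icc a (b-1), f j * g j
        - ∑ j ∈ Finset.Icc a (b-1), f (j+1) * g j
      = -∑ j ∈ Finset.Icc a (b-1), g j * (f (j + 1) - f j) := by
    rw [← Finset.sum_sub_distrib, ← Finset.sum_neg_distrib]
    apply Finset.sum_congr rfl; intro j _; ring
  rw [h1, h2, sum_split_top a b hab (fun j => f j * g j),
    sum_split_bot a (b-1) (by omega) (fun j => f (j+1) * g j), hga, hgb]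
  rw [mul_zero, mul_zero, add_zero, zero_add]
  exact h3

/-- The pointwise upwind flux inequality. -/
private lemma flux_ineq (v cj cj1 : ℝ) (h1 : 0 ≤ cj) (h2 : 0 ≤ cj1) :
    v ^ 2 * min cj cj1 ≤ v * (max v 0 * cj - max (-v) 0 * cj1) := by
  rcases le_total v 0 with hv | hv
  · rw [max_eq_right hv, max_eq_left (by linarith)]
    have : min cj cj1 ≤ cj1 := min_le_right _ _
    nlinarith [sq_nonneg v]
  · rw [max_eq_left hv, max_eq_right (by linarith)]
    have : min cj cj1 ≤ cj := min_le_left _ _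
    nlinarith [sq_nonneg v]

/-- Discrete free energy–dissipation estimate (Theorem 3.2) for the one-dimensional
semi-discrete upwind finite volume scheme with no-flux boundary conditions.
Here `F m j t` denotes the flux `F_{m,j+1/2}(t)` and `u m j t` the velocity
`u_{m,j+1/2}(t)`; the boundary fluxes `F_{m,-N-1/2}` and `F_{m,N+1/2}` vanish. -/
theorem discrete_free_energy_dissipation_1d
    (M N : ℕ) (hM : 1 ≤ M) (hN : 1 ≤ N)
    (Δx : ℤ → ℝ) (hΔx : ∀ j ∈ Finset.Icc (-(N : ℤ)) (N : ℤ), 0 < Δx j)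
    (z : Fin M → ℤ) (K W : ℤ → ℝ)
    (hKsymm : ∀ n, K n = K (-n)) (hWsymm : ∀ n, W n = W (-n))
    (c : Fin M → ℤ → ℝ → ℝ)
    (hcpos : ∀ m, ∀ j ∈ Finset.Icc (-(N : ℤ)) (N : ℤ), ∀ t, 0 < c m j t)
    (hcdiff : ∀ m, ∀ j ∈ Finset.Icc (-(N : ℤ)) (N : ℤ), Differentiable ℝ (c m j))
    (ρ θ : ℤ → ℝ → ℝ)
    (hρ : ∀ j t, ρ j t = ∑ m, (z m : ℝ) * c m j t)
    (hθ : ∀ j t, θ j t = ∑ m, c m j t)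
    (ψ : Fin M → ℤ → ℝ → ℝ)
    (hψ : ∀ m, ∀ j ∈ Finset.Icc (-(N : ℤ)) (N : ℤ), ∀ t,
      ψ m j t = 1 + Real.log (c m j t)
        + ∑ i ∈ Finset.Icc (-(N : ℤ)) (N : ℤ),
            Δx i * ((z m : ℝ) * K (j - i) * ρ i t + W (j - i) * θ i t))
    (u : Fin M → ℤ → ℝ → ℝ)
    (hu : ∀ m, ∀ j ∈ Finset.Icc (-(N : ℤ)) ((N : ℤ) - 1), ∀ t,
      u m j t = -(ψ m (j + 1) t - ψ m j t) / Δx j)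
    (F : Fin M → ℤ → ℝ → ℝ)
    (hF : ∀ m, ∀ j ∈ Finset.Icc (-(N : ℤ)) ((N : ℤ) - 1), ∀ t,
      F m j t = max (u m j t) 0 * c m j t - max (-(u m j t)) 0 * c m (j + 1) t)
    (hFl : ∀ m t, F m (-(N : ℤ) - 1) t = 0)
    (hFr : ∀ m t, F m (N : ℤ) t = 0)
    (hscheme : ∀ m, ∀ j ∈ Finset.Icc (-(N : ℤ)) (N : ℤ), ∀ t,
      deriv (c m j) t = -(F m j t - F m (j - 1) t) / Δx j)
    (E D : ℝ → ℝ)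
    (hE : ∀ t, E t =
      (∑ m, ∑ j ∈ Finset.Icc (-(N : ℤ)) (N : ℤ), Δx j * (c m j t * Real.log (c m j t)))
      + (1 / 2) * ∑ i ∈ Finset.Icc (-(N : ℤ)) (N : ℤ), ∑ j ∈ Finset.Icc (-(N : ℤ)) (N : ℤ),
          Δx j * Δx i * (K (j - i) * ρ i t * ρ j t + W (j - i) * θ i t * θ j t))
    (hD : ∀ t, D t = ∑ m, ∑ j ∈ Finset.Icc (-(N : ℤ)) ((N : ℤ) - 1),
      Δx j * (u m j t) ^ 2 * min (c m j t) (c m (j + 1) t)) :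
    Differentiable ℝ E ∧ ∀ t, deriv E t ≤ -D t ∧ -D t ≤ 0 := by
  set S : Finset ℤ := Finset.Icc (-(N : ℤ)) (N : ℤ) with hS
  set S' : Finset ℤ := Finset.Icc (-(N : ℤ)) ((N : ℤ) - 1) with hS'
  have hsub : ∀ j ∈ S', j ∈ S ∧ (j + 1) ∈ S := by
    intro j hj
    rw [hS', Finset.mem_Icc] at hj
    constructor <;> (rw [hS, Finset.mem_Icc]; omega)
  -- derivatives of c, ρ, θ
  have hcd : ∀ m, ∀ j ∈ S, ∀ t, HasDerivAt (c m j) (deriv (c m j) t) t :=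
    fun m j hj t => ((hcdiff m j hj t).hasDerivAt)
  have hρd : ∀ j ∈ S, ∀ t, HasDerivAt (ρ j) (∑ m, (z m : ℝ) * deriv (c m j) t) t := by
    intro j hj t
    rw [show ρ j = fun t => ∑ m, (z m : ℝ) * c m j t from funext (hρ j)]
    exact HasDerivAt.fun_sum (fun m _ => (hcd m j hj t).const_mul _)
  have hθd : ∀ j ∈ S, ∀ t, HasDerivAt (θ j) (∑ m, deriv (c m j) t) t := by
    intro j hj t
    rw [show θ j = fun t => ∑ m, c m j t from funext (hθ j)]
    exact HasDerivAt.fun_sum (fun m _ => hcd m j hj t)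
  -- the derivative of E
  have key : ∀ t, HasDerivAt E
      ((∑ m, ∑ j ∈ S, Δx j * (deriv (c m j) t * (Real.log (c m j t) + 1)))
       + (1/2) * ∑ i ∈ S, ∑ j ∈ S, Δx j * Δx i *
           (K (j - i) * ((∑ m, (z m : ℝ) * deriv (c m i) t) * ρ j t
              + ρ i t * (∑ m, (z m : ℝ) * deriv (c m j) t))
            + W (j - i) * ((∑ m, deriv (c m i) t) * θ j t
              + θ i t * (∑ m, deriv (c m j) t)))) t := by
    intro t
    rw [show E = fun t => (∑ m, ∑ j ∈ S, Δx j * (c m j t * Real.log (c m j t)))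
      + (1 / 2) * ∑ i ∈ S, ∑ j ∈ S,
          Δx j * Δx i * (K (j - i) * ρ i t * ρ j t + W (j - i) * θ i t * θ j t)
      from funext hE]
    apply HasDerivAt.add
    · apply HasDerivAt.fun_sum; intro m _
      apply HasDerivAt.fun_sum; intro j hj
      have hc0 : c m j t ≠ 0 := (hcpos m j hj t).ne'
      have hlog : HasDerivAt (fun t => Real.log (c m j t))
          ((c m j t)⁻¹ * deriv (c m j) t) t :=
        (Real.hasDerivAt_log hc0).comp t (hcd m j hj t)
      have := ((hcd m j hj t).fun_mul hlog).const_mul (Δx j)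
      refine this.congr_deriv ?_
      rw [mul_inv_cancel_left₀ hc0]
      ring
    · apply HasDerivAt.const_mul
      apply HasDerivAt.fun_sum; intro i hi
      apply HasDerivAt.fun_sum; intro j hj
      have hK : HasDerivAt (fun t => K (j - i) * ρ i t * ρ j t)
          (K (j - i) * ((∑ m, (z m : ℝ) * deriv (c m i) t) * ρ j t
            + ρ i t * (∑ m, (z m : ℝ) * deriv (c m j) t))) t := by
        have := ((hρd i hi t).const_mul (K (j - i))).fun_mul (hρd j hj t)
        exact this.congr_deriv (by ring)
      have hW : HasDerivAt (fun t => W (j - i) * θ i t * θ j t)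
          (W (j - i) * ((∑ m, deriv (c m i) t) * θ j t
            + θ i t * (∑ m, deriv (c m j) t))) t := by
        have := ((hθd i hi t).const_mul (W (j - i))).fun_mul (hθd j hj t)
        exact this.congr_deriv (by ring)
      exact (hK.add hW).const_mul _
  refine ⟨fun t => (key t).differentiableAt, fun t => ?_⟩
  constructor
  · -- main inequality
    rw [(key t).deriv]
    -- Step 1: the derivative equals ∑_m ∑_j (Δx j * c') * ψ
    have step1 :
        (∑ m, ∑ j ∈ S, Δx j * (deriv (c m j) t * (Real.log (c m j t) + 1)))
        + (1/2) * ∑ i ∈ S, ∑ j ∈ S, Δx j * Δx i *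
            (K (j - i) * ((∑ m, (z m : ℝ) * deriv (c m i) t) * ρ j t
               + ρ i t * (∑ m, (z m : ℝ) * deriv (c m j) t))
             + W (j - i) * ((∑ m, deriv (c m i) t) * θ j t
               + θ i t * (∑ m, deriv (c m j) t)))
        = ∑ m, ∑ j ∈ S, (Δx j * deriv (c m j) t) * ψ m j t := by
      -- symmetrization of the quadratic term
      have symm : ∑ i ∈ S, ∑ j ∈ S, Δx j * Δx i *
            (K (j - i) * ((∑ m, (z m : ℝ) * deriv (c m i) t) * ρ j t)
             + W (j - i) * ((∑ m, deriv (c m i) t) * θ j t))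
          = ∑ i ∈ S, ∑ j ∈ S, Δx j * Δx i *
            (K (j - i) * (ρ i t * (∑ m, (z m : ℝ) * deriv (c m j) t))
             + W (j - i) * (θ i t * (∑ m, deriv (c m j) t))) := by
        rw [Finset.sum_comm]
        apply Finset.sum_congr rfl; intro i _
        apply Finset.sum_congr rfl; intro j _
        rw [show K (i - j) = K (j - i) by rw [hKsymm (i-j)]; ring_nf,
            show W (i - j) = W (j - i) by rw [hWsymm (i-j)]; ring_nf]
        ring
      have quad : (1/2) * ∑ i ∈ S, ∑ j ∈ S, Δx j * Δx i *
            (K (j - i) * ((∑ m, (z m : ℝ) * deriv (c m i) t) * ρ j t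
               + ρ i t * (∑ m, (z m : ℝ) * deriv (c m j) t))
             + W (j - i) * ((∑ m, deriv (c m i) t) * θ j t
               + θ i t * (∑ m, deriv (c m j) t)))
          = ∑ i ∈ S, ∑ j ∈ S, Δx j * Δx i *
            (K (j - i) * (ρ i t * (∑ m, (z m : ℝ) * deriv (c m j) t))
             + W (j - i) * (θ i t * (∑ m, deriv (c m j) t))) := by
        calc (1/2) * ∑ i ∈ S, ∑ j ∈ S, Δx j * Δx i *
            (K (j - i) * ((∑ m, (z m : ℝ) * deriv (c m i) t) * ρ j t
               + ρ i t * (∑ m, (z m : ℝ) * deriv (c m j) t))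
             + W (j - i) * ((∑ m, deriv (c m i) t) * θ j t
               + θ i t * (∑ m, deriv (c m j) t)))
            = (1/2) * ((∑ i ∈ S, ∑ j ∈ S, Δx j * Δx i *
              (K (j - i) * ((∑ m, (z m : ℝ) * deriv (c m i) t) * ρ j t)
               + W (j - i) * ((∑ m, deriv (c m i) t) * θ j t)))
            + ∑ i ∈ S, ∑ j ∈ S, Δx j * Δx i *
              (K (j - i) * (ρ i t * (∑ m, (z m : ℝ) * deriv (c m j) t))
               + W (j - i) * (θ i t * (∑ m, deriv (c m j) t)))) := by
              rw [← Finset.sum_add_distrib]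
              congr 1
              apply Finset.sum_congr rfl; intro i _
              rw [← Finset.sum_add_distrib]
              apply Finset.sum_congr rfl; intro j _
              ring
          _ = _ := by rw [symm]; ring
      rw [quad]
      -- now expand ψ on the RHS
      have rhs : ∑ m, ∑ j ∈ S, (Δx j * deriv (c m j) t) * ψ m j t
          = (∑ m, ∑ j ∈ S, Δx j * (deriv (c m j) t * (Real.log (c m j t) + 1)))
          + ∑ m, ∑ j ∈ S, ∑ i ∈ S, (Δx j * deriv (c m j) t) *
              (Δx i * ((z m : ℝ) * K (j - i) * ρ i t + W (j - i) * θ i t)) := by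
        rw [← Finset.sum_add_distrib]
        apply Finset.sum_congr rfl; intro m _
        rw [← Finset.sum_add_distrib]
        apply Finset.sum_congr rfl; intro j hj
        rw [hψ m j hj t, mul_add, Finset.mul_sum]
        congr 1
        ring
      rw [rhs]
      congr 1
      symm
      calc ∑ m, ∑ j ∈ S, ∑ i ∈ S, (Δx j * deriv (c m j) t) *
              (Δx i * ((z m : ℝ) * K (j - i) * ρ i t + W (j - i) * θ i t))
          = ∑ j ∈ S, ∑ m, ∑ i ∈ S, (Δx j * deriv (c m j) t) *
              (Δx i * ((z m : ℝ) * K (j - i) * ρ i t + W (j - i) * θ i t)) :=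
            Finset.sum_comm
        _ = ∑ j ∈ S, ∑ i ∈ S, ∑ m, (Δx j * deriv (c m j) t) *
              (Δx i * ((z m : ℝ) * K (j - i) * ρ i t + W (j - i) * θ i t)) :=
            Finset.sum_congr rfl (fun j _ => Finset.sum_comm)
        _ = ∑ i ∈ S, ∑ j ∈ S, ∑ m, (Δx j * deriv (c m j) t) *
              (Δx i * ((z m : ℝ) * K (j - i) * ρ i t + W (j - i) * θ i t)) :=
            Finset.sum_comm
        _ = ∑ i ∈ S, ∑ j ∈ S, Δx j * Δx i *
            (K (j - i) * (ρ i t * (∑ m, (z m : ℝ) * deriv (c m j) t))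
             + W (j - i) * (θ i t * (∑ m, deriv (c m j) t))) := by
            apply Finset.sum_congr rfl; intro i _
            apply Finset.sum_congr rfl; intro j _
            simp only [Finset.mul_sum, mul_add]
            rw [← Finset.sum_add_distrib]
            apply Finset.sum_congr rfl; intro m _
            ring
    rw [step1]
    -- Step 2: apply the scheme and sum by parts
    have hΔc : ∀ m, ∀ j ∈ S, Δx j * deriv (c m j) t = -(F m j t - F m (j-1) t) := by
      intro m j hj
      have hne : Δx j ≠ 0 := (hΔx j hj).ne'
      rw [hscheme m j hj t]
      field_simp
    have step2 : ∑ m, ∑ j ∈ S, (Δx j * deriv (c m j) t) * ψ m j t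
        = ∑ m, ∑ j ∈ S', -(Δx j * u m j t * F m j t) := by
      apply Finset.sum_congr rfl; intro m _
      have e1 : ∑ j ∈ S, (Δx j * deriv (c m j) t) * ψ m j t
          = -∑ j ∈ S, ψ m j t * (F m j t - F m (j-1) t) := by
        rw [← Finset.sum_neg_distrib]
        apply Finset.sum_congr rfl; intro j hj
        rw [hΔc m j hj]; ring
      have e2 : ∑ j ∈ S, ψ m j t * (F m j t - F m (j-1) t)
          = -∑ j ∈ S', F m j t * (ψ m (j+1) t - ψ m j t) := by
        have hNN : -(N : ℤ) ≤ (N : ℤ) := by omega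
        have := abel_parts (-(N : ℤ)) (N : ℤ) hNN
          (fun j => ψ m j t) (fun j => F m j t) (hFl m t) (hFr m t)
        exact this
      have e3 : ∀ j ∈ S', F m j t * (ψ m (j+1) t - ψ m j t)
          = -(Δx j * u m j t * F m j t) := by
        intro j hj
        obtain ⟨hjS, _⟩ := hsub j hj
        have hne : Δx j ≠ 0 := (hΔx j hjS).ne'
        have hpsi : ψ m (j+1) t - ψ m j t = -(Δx j * u m j t) := by
          rw [hu m j hj t]
          field_simp
        rw [hpsi]; ring
      rw [e1, e2, neg_neg]
      exact Finset.sum_congr rfl e3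
    rw [step2, hD t]
    have hDneg : -∑ m, ∑ j ∈ S', Δx j * u m j t ^ 2 * min (c m j t) (c m (j+1) t)
        = ∑ m, ∑ j ∈ S', -(Δx j * u m j t ^ 2 * min (c m j t) (c m (j+1) t)) := by
      rw [← Finset.sum_neg_distrib]
      apply Finset.sum_congr rfl; intro m _
      rw [← Finset.sum_neg_distrib]
    rw [hDneg]
    apply Finset.sum_le_sum; intro m _
    apply Finset.sum_le_sum; intro j hj
    obtain ⟨hjS, hj1S⟩ := hsub j hj
    have h1 := (hcpos m j hjS t).le
    have h2 := (hcpos m (j+1) hj1S t).le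
    have hfi := flux_ineq (u m j t) (c m j t) (c m (j+1) t) h1 h2
    have h := mul_le_mul_of_nonneg_left hfi (hΔx j hjS).le
    rw [← hF m j hj t] at h
    nlinarith [h]
  · -- -D t ≤ 0
    rw [hD t]
    rw [neg_nonpos]
    apply Finset.sum_nonneg; intro m _
    apply Finset.sum_nonneg; intro j hj
    obtain ⟨hjS, hj1S⟩ := hsub j hj
    have := (hcpos m j hjS t).le
    have := (hcpos m (j+1) hj1S t).le
    have := (hΔx j hjS).le
    positivity
end

section
/- Let M ≥ 1, N ≥ 1, uniform-in-index cell widths Δx_j > 0 and Δy_k > 0 for j,k ∈ {−N,…,N}, integer valences z_1,…,z_M, and symmetric discrete kernels K, W : ℤ×ℤ → ℝ with K_{n,l} = K_{−n,−l} and W_{n,l} = W_{−n,−l}. Suppose c_{m,j,k} : ℝ → (0,∞) is differentiable for each m ∈ {1,…,M} and j,k ∈ {−N,…,N}. Define ρ_{j,k}(t) := Σ_m z_m c_{m,j,k}(t), θ_{j,k}(t) := Σ_m c_{m,j,k}(t), ψ_{m,j,k}(t) := 1 + log c_{m,j,k}(t) + Σ_{i,l=−N}^{N} Δx_i Δy_l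 ( z_m K_{j−i,k−l} ρ_{i,l}(t) + W_{j−i,k−l} θ_{i,l}(t) ), velocities u_{m,j+1/2,k} := −(ψ_{m,j+1,k} − ψ_{m,j,k})/Δx_j for j ≤ N−1 and v_{m,j,k+1/2} := −(ψ_{m,j,k+1} − ψ_{m,j,k})/Δy_k for k ≤ N−1, upwind fluxes F^x_{m,j+1/2,k} := u⁺_{m,j+1/2,k} c_{m,j,k} − u⁻_{m,j+1/2,k} c_{m,j+1,k} and F^y_{m,j,k+1/2} := v⁺_{m,j,k+1/2} c_{m,j,k} − v⁻_{m,j,k+1/2} c_{m,j,k+1}, with no-flux boundary convention F^x_{m,±(N+1/2),k} = 0 and F^y_{m,j,±(N+1/2)} = 0. Assume d/dt c_{m,j,k} = −(F^x_{m,j+1/2,k} − F^x_{m,j−1/2,k})/Δx_j − (F^y_{m,j,k+1/2} − F^y_{m,j,k−1/2})/Δy_k for all m,j,k,t. Define E_Δ(t) := Σ_m Σ_{j,k} Δx_j Δy_k c_{m,j,k} log c_{m,j,k} + (1/2) Σ_{i,j,k,l} Δx_j Δx_i Δy_k Δy_l ( K_{j−i,k−l} ρ_{i,l} ρ_{j,k}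 + W_{j−i,k−l} θ_{i,l} θ_{j,k} ) and D_Δ(t) := Σ_m Σ_{j,k=−N}^{N−1} Δx_j Δy_k [ (u_{m,j+1/2,k})² + (v_{m,j,k+1/2})² ] · min( c_{m,j,k}, c_{m,j+1,k}, c_{m,j,k+1} ). Then E_Δ is differentiable and d/dt E_Δ(t) ≤ −D_Δ(t) ≤ 0 for all t. -/
lemma sum_comm3 {α β γ M : Type*} [AddCommMonoid M] (s : Finset α) (t : Finset β) (u : Finset γ)
    (f : α → β → γ → M) :
    ∑ a ∈ s, ∑ b ∈ t, ∑ c ∈ u, f a b c = ∑ b ∈ t, ∑ c ∈ u, ∑ a ∈ s, f a b c := by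
  rw [Finset.sum_comm]; exact Finset.sum_congr rfl fun b _ => Finset.sum_comm

lemma swap_pairs {M : Type*} [AddCommMonoid M] (s t : Finset ℤ) (f : ℤ → ℤ → ℤ → ℤ → M) :
    ∑ i ∈ s, ∑ j ∈ s, ∑ k ∈ t, ∑ l ∈ t, f i j k l
      = ∑ i ∈ s, ∑ j ∈ s, ∑ k ∈ t, ∑ l ∈ t, f j i l k := by
  rw [Finset.sum_comm]
  exact Finset.sum_congr rfl fun i _ => Finset.sum_congr rfl fun j _ => Finset.sum_comm

lemma upwind_lower (u a b mn : ℝ) (hmn : mn ≤ min a b) :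
    u ^ 2 * mn ≤ (max u 0 * a - max (-u) 0 * b) * u := by
  rcases le_total 0 u with h | h
  · rw [max_eq_left h, max_eq_right (by linarith : -u ≤ 0)]
    have := min_le_left a b
    nlinarith
  · rw [max_eq_right h, max_eq_left (by linarith : 0 ≤ -u)]
    have := min_le_right a b
    nlinarith

lemma shift_sum (a b : ℤ) (h : ℤ → ℝ) :
    ∑ j ∈ Finset.Icc a b, h (j-1) = ∑ j ∈ Finset.Icc (a-1) (b-1), h j := by
  rw [show Finset.Icc a b = (Finset.Icc (a-1) (b-1)).map (addRightEmbedding 1) by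
    rw [Finset.map_add_right_Icc]; congr 1 <;> ring, Finset.sum_map]
  simp [addRightEmbedding]

lemma sbp (N : ℕ) (g F : ℤ → ℝ)
    (hFl : F (-(N:ℤ) - 1) = 0) (hFr : F (N:ℤ) = 0) :
    ∑ j ∈ Finset.Icc (-(N:ℤ)) (N:ℤ), g j * (F j - F (j-1))
      = ∑ j ∈ Finset.Icc (-(N:ℤ)) ((N:ℤ)-1), F j * (g j - g (j+1)) := by
  have h1 : ∑ j ∈ Finset.Icc (-(N:ℤ)) (N:ℤ), g j * (F j - F (j-1))
      = ∑ j ∈ Finset.Icc (-(N:ℤ)) (N:ℤ), g j * F j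
        - ∑ j ∈ Finset.Icc (-(N:ℤ)) (N:ℤ), g j * F (j-1) := by
    rw [← Finset.sum_sub_distrib]; exact Finset.sum_congr rfl fun j _ => by ring
  have h2 : ∑ j ∈ Finset.Icc (-(N:ℤ)) (N:ℤ), g j * F (j-1)
      = ∑ j ∈ Finset.Icc (-(N:ℤ)-1) ((N:ℤ)-1), g (j+1) * F j := by
    have := shift_sum (-(N:ℤ)) (N:ℤ) (fun i => g (i+1) * F i)
    simp only [sub_add_cancel] at this
    exact this
  have h3 : Finset.Icc (-(N:ℤ)) (N:ℤ) = insert (N:ℤ) (Finset.Icc (-(N:ℤ)) ((N:ℤ)-1)) := by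
    ext x; simp; omega
  have h4 : Finset.Icc (-(N:ℤ)-1) ((N:ℤ)-1)
      = insert (-(N:ℤ)-1) (Finset.Icc (-(N:ℤ)) ((N:ℤ)-1)) := by
    ext x; simp; omega
  rw [h1, h2, h3, h4, Finset.sum_insert (by simp), Finset.sum_insert (by simp),
    hFr, hFl]
  simp only [mul_zero, zero_add]
  rw [← Finset.sum_sub_distrib]
  exact Finset.sum_congr rfl fun j _ => by ring

/-- Discrete free energy–dissipation estimate (Theorem 3.4) for the two-dimensional
semi-discrete upwind finite volume scheme with no-flux boundary conditions.
Here `Fx m j k t` denotes `F^x_{m,j+1/2,k}(t)`, `Fy m j k t` denotes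
`F^y_{m,j,k+1/2}(t)`, `u m j k t` denotes `u_{m,j+1/2,k}(t)` and `v m j k t`
denotes `v_{m,j,k+1/2}(t)`. -/
theorem discrete_free_energy_dissipation_2d
    (M N : ℕ) (hM : 1 ≤ M) (hN : 1 ≤ N)
    (Δx Δy : ℤ → ℝ)
    (hΔx : ∀ j ∈ Finset.Icc (-(N : ℤ)) (N : ℤ), 0 < Δx j)
    (hΔy : ∀ k ∈ Finset.Icc (-(N : ℤ)) (N : ℤ), 0 < Δy k)
    (z : Fin M → ℤ) (K W : ℤ → ℤ → ℝ)
    (hKsymm : ∀ n l, K n l = K (-n) (-l)) (hWsymm : ∀ n l, W n l = W (-n) (-l))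
    (c : Fin M → ℤ → ℤ → ℝ → ℝ)
    (hcpos : ∀ m, ∀ j ∈ Finset.Icc (-(N : ℤ)) (N : ℤ),
      ∀ k ∈ Finset.Icc (-(N : ℤ)) (N : ℤ), ∀ t, 0 < c m j k t)
    (hcdiff : ∀ m, ∀ j ∈ Finset.Icc (-(N : ℤ)) (N : ℤ),
      ∀ k ∈ Finset.Icc (-(N : ℤ)) (N : ℤ), Differentiable ℝ (c m j k))
    (ρ θ : ℤ → ℤ → ℝ → ℝ)
    (hρ : ∀ j k t, ρ j k t = ∑ m, (z m : ℝ) * c m j k t)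
    (hθ : ∀ j k t, θ j k t = ∑ m, c m j k t)
    (ψ : Fin M → ℤ → ℤ → ℝ → ℝ)
    (hψ : ∀ m, ∀ j ∈ Finset.Icc (-(N : ℤ)) (N : ℤ),
      ∀ k ∈ Finset.Icc (-(N : ℤ)) (N : ℤ), ∀ t,
      ψ m j k t = 1 + Real.log (c m j k t)
        + ∑ i ∈ Finset.Icc (-(N : ℤ)) (N : ℤ), ∑ l ∈ Finset.Icc (-(N : ℤ)) (N : ℤ),
            Δx i * Δy l * ((z m : ℝ) * K (j - i) (k - l) * ρ i l t
              + W (j - i) (k - l) * θ i l t))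
    (u v : Fin M → ℤ → ℤ → ℝ → ℝ)
    (hu : ∀ m, ∀ j ∈ Finset.Icc (-(N : ℤ)) ((N : ℤ) - 1),
      ∀ k ∈ Finset.Icc (-(N : ℤ)) (N : ℤ), ∀ t,
      u m j k t = -(ψ m (j + 1) k t - ψ m j k t) / Δx j)
    (hv : ∀ m, ∀ j ∈ Finset.Icc (-(N : ℤ)) (N : ℤ),
      ∀ k ∈ Finset.Icc (-(N : ℤ)) ((N : ℤ) - 1), ∀ t,
      v m j k t = -(ψ m j (k + 1) t - ψ m j k t) / Δy k)
    (Fx Fy : Fin M → ℤ → ℤ → ℝ → ℝ)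
    (hFx : ∀ m, ∀ j ∈ Finset.Icc (-(N : ℤ)) ((N : ℤ) - 1),
      ∀ k ∈ Finset.Icc (-(N : ℤ)) (N : ℤ), ∀ t,
      Fx m j k t = max (u m j k t) 0 * c m j k t - max (-(u m j k t)) 0 * c m (j + 1) k t)
    (hFy : ∀ m, ∀ j ∈ Finset.Icc (-(N : ℤ)) (N : ℤ),
      ∀ k ∈ Finset.Icc (-(N : ℤ)) ((N : ℤ) - 1), ∀ t,
      Fy m j k t = max (v m j k t) 0 * c m j k t - max (-(v m j k t)) 0 * c m j (k + 1) t)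
    (hFxl : ∀ m k t, Fx m (-(N : ℤ) - 1) k t = 0)
    (hFxr : ∀ m k t, Fx m (N : ℤ) k t = 0)
    (hFyl : ∀ m j t, Fy m j (-(N : ℤ) - 1) t = 0)
    (hFyr : ∀ m j t, Fy m j (N : ℤ) t = 0)
    (hscheme : ∀ m, ∀ j ∈ Finset.Icc (-(N : ℤ)) (N : ℤ),
      ∀ k ∈ Finset.Icc (-(N : ℤ)) (N : ℤ), ∀ t,
      deriv (c m j k) t = -(Fx m j k t - Fx m (j - 1) k t) / Δx j
        - (Fy m j k t - Fy m j (k - 1) t) / Δy k)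
    (E D : ℝ → ℝ)
    (hE : ∀ t, E t =
      (∑ m, ∑ j ∈ Finset.Icc (-(N : ℤ)) (N : ℤ), ∑ k ∈ Finset.Icc (-(N : ℤ)) (N : ℤ),
        Δx j * Δy k * (c m j k t * Real.log (c m j k t)))
      + (1 / 2) * ∑ i ∈ Finset.Icc (-(N : ℤ)) (N : ℤ), ∑ j ∈ Finset.Icc (-(N : ℤ)) (N : ℤ),
          ∑ k ∈ Finset.Icc (-(N : ℤ)) (N : ℤ), ∑ l ∈ Finset.Icc (-(N : ℤ)) (N : ℤ),
          Δx j * Δx i * Δy k * Δy l * (K (j - i) (k - l) * ρ i l t * ρ j k t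
            + W (j - i) (k - l) * θ i l t * θ j k t))
    (hD : ∀ t, D t = ∑ m, ∑ j ∈ Finset.Icc (-(N : ℤ)) ((N : ℤ) - 1),
      ∑ k ∈ Finset.Icc (-(N : ℤ)) ((N : ℤ) - 1),
      Δx j * Δy k * ((u m j k t) ^ 2 + (v m j k t) ^ 2)
        * min (c m j k t) (min (c m (j + 1) k t) (c m j (k + 1) t))) :
    Differentiable ℝ E ∧ ∀ t, deriv E t ≤ -D t ∧ -D t ≤ 0 := by
  set S := Finset.Icc (-(N:ℤ)) (N:ℤ) with hSdef
  set S' := Finset.Icc (-(N:ℤ)) ((N:ℤ)-1) with hS'def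
  have hsub : S' ⊆ S := Finset.Icc_subset_Icc le_rfl (by omega)
  have hS'S : ∀ j, j ∈ S' → j ∈ S ∧ j + 1 ∈ S := by
    intro j hj
    rw [hS'def, Finset.mem_Icc] at hj
    constructor <;> (rw [hSdef, Finset.mem_Icc]; omega)
  have hcne : ∀ m, ∀ j ∈ S, ∀ k ∈ S, ∀ t, c m j k t ≠ 0 :=
    fun m j hj k hk t => ne_of_gt (hcpos m j hj k hk t)
  have hc' : ∀ m, ∀ j ∈ S, ∀ k ∈ S, ∀ t, HasDerivAt (c m j k) (deriv (c m j k) t) t :=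
    fun m j hj k hk t => ((hcdiff m j hj k hk) t).hasDerivAt
  have hρ' : ∀ i ∈ S, ∀ l ∈ S, ∀ t,
      HasDerivAt (ρ i l) (∑ m, (z m : ℝ) * deriv (c m i l) t) t := by
    intro i hi l hl t
    have h : ρ i l = fun s => ∑ m, (z m : ℝ) * c m i l s := funext fun s => hρ i l s
    rw [h]
    exact HasDerivAt.fun_sum fun m _ => (hc' m i hi l hl t).const_mul _
  have hθ' : ∀ i ∈ S, ∀ l ∈ S, ∀ t,
      HasDerivAt (θ i l) (∑ m, deriv (c m i l) t) t := by
    intro i hi l hl t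
    have h : θ i l = fun s => ∑ m, c m i l s := funext fun s => hθ i l s
    rw [h]
    exact HasDerivAt.fun_sum fun m _ => hc' m i hi l hl t
  -- raw derivative of E
  have key : ∀ t, HasDerivAt E
      ((∑ m, ∑ j ∈ S, ∑ k ∈ S, Δx j * Δy k *
          (deriv (c m j k) t * Real.log (c m j k t)
            + c m j k t * (deriv (c m j k) t / c m j k t)))
        + (1/2) * ∑ i ∈ S, ∑ j ∈ S, ∑ k ∈ S, ∑ l ∈ S,
            Δx j * Δx i * Δy k * Δy l *
              ((K (j-i) (k-l) * (∑ m, (z m : ℝ) * deriv (c m i l) t) * ρ j k t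
                  + K (j-i) (k-l) * ρ i l t * (∑ m, (z m : ℝ) * deriv (c m j k) t))
                + (W (j-i) (k-l) * (∑ m, deriv (c m i l) t) * θ j k t
                  + W (j-i) (k-l) * θ i l t * (∑ m, deriv (c m j k) t)))) t := by
    intro t
    have hEfun : E = fun s =>
        (∑ m, ∑ j ∈ S, ∑ k ∈ S, Δx j * Δy k * (c m j k s * Real.log (c m j k s)))
        + (1 / 2) * ∑ i ∈ S, ∑ j ∈ S, ∑ k ∈ S, ∑ l ∈ S,
            Δx j * Δx i * Δy k * Δy l * (K (j - i) (k - l) * ρ i l s * ρ j k s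
              + W (j - i) (k - l) * θ i l s * θ j k s) := funext fun s => hE s
    rw [hEfun]
    refine HasDerivAt.add ?_ ?_
    · refine HasDerivAt.fun_sum fun m _ => ?_
      refine HasDerivAt.fun_sum fun j hj => ?_
      refine HasDerivAt.fun_sum fun k hk => ?_
      exact ((hc' m j hj k hk t).mul
        ((hc' m j hj k hk t).log (hcne m j hj k hk t))).const_mul _
    · refine HasDerivAt.const_mul _ ?_
      refine HasDerivAt.fun_sum fun i hi => ?_
      refine HasDerivAt.fun_sum fun j hj => ?_
      refine HasDerivAt.fun_sum fun k hk => ?_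
      refine HasDerivAt.fun_sum fun l hl => ?_
      exact ((((hρ' i hi l hl t).const_mul _).mul (hρ' j hj k hk t)).add
        (((hθ' i hi l hl t).const_mul _).mul (hθ' j hj k hk t))).const_mul _
  -- the derivative equals ∑ ψ c'
  have hA1 : ∀ t,
      ((∑ m, ∑ j ∈ S, ∑ k ∈ S, Δx j * Δy k *
          (deriv (c m j k) t * Real.log (c m j k t)
            + c m j k t * (deriv (c m j k) t / c m j k t)))
        + (1/2) * ∑ i ∈ S, ∑ j ∈ S, ∑ k ∈ S, ∑ l ∈ S,
            Δx j * Δx i * Δy k * Δy l *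
              ((K (j-i) (k-l) * (∑ m, (z m : ℝ) * deriv (c m i l) t) * ρ j k t
                  + K (j-i) (k-l) * ρ i l t * (∑ m, (z m : ℝ) * deriv (c m j k) t))
                + (W (j-i) (k-l) * (∑ m, deriv (c m i l) t) * θ j k t
                  + W (j-i) (k-l) * θ i l t * (∑ m, deriv (c m j k) t))))
      = ∑ m, ∑ j ∈ S, ∑ k ∈ S, Δx j * Δy k * (ψ m j k t * deriv (c m j k) t) := by
    intro t
    -- Part I: entropy part
    have hpart1 : (∑ m, ∑ j ∈ S, ∑ k ∈ S, Δx j * Δy k *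
          (deriv (c m j k) t * Real.log (c m j k t)
            + c m j k t * (deriv (c m j k) t / c m j k t)))
        = ∑ m, ∑ j ∈ S, ∑ k ∈ S, Δx j * Δy k
            * ((1 + Real.log (c m j k t)) * deriv (c m j k) t) := by
      refine Finset.sum_congr rfl fun m _ => Finset.sum_congr rfl fun j hj =>
        Finset.sum_congr rfl fun k hk => ?_
      rw [mul_comm (c m j k t) (deriv (c m j k) t / c m j k t),
        div_mul_cancel₀ _ (hcne m j hj k hk t)]
      ring
    -- quadratic part: split into two halves
    have hsplitq : (∑ i ∈ S, ∑ j ∈ S, ∑ k ∈ S, ∑ l ∈ S,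
          Δx j * Δx i * Δy k * Δy l *
            ((K (j-i) (k-l) * (∑ m, (z m : ℝ) * deriv (c m i l) t) * ρ j k t
                + K (j-i) (k-l) * ρ i l t * (∑ m, (z m : ℝ) * deriv (c m j k) t))
              + (W (j-i) (k-l) * (∑ m, deriv (c m i l) t) * θ j k t
                + W (j-i) (k-l) * θ i l t * (∑ m, deriv (c m j k) t))))
        = (∑ i ∈ S, ∑ j ∈ S, ∑ k ∈ S, ∑ l ∈ S,
            Δx j * Δx i * Δy k * Δy l *
              (K (j-i) (k-l) * (∑ m, (z m : ℝ) * deriv (c m i l) t) * ρ j k t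
                + W (j-i) (k-l) * (∑ m, deriv (c m i l) t) * θ j k t))
          + (∑ i ∈ S, ∑ j ∈ S, ∑ k ∈ S, ∑ l ∈ S,
            Δx j * Δx i * Δy k * Δy l *
              (K (j-i) (k-l) * ρ i l t * (∑ m, (z m : ℝ) * deriv (c m j k) t)
                + W (j-i) (k-l) * θ i l t * (∑ m, deriv (c m j k) t))) := by
      rw [← Finset.sum_add_distrib]
      refine Finset.sum_congr rfl fun i _ => ?_
      rw [← Finset.sum_add_distrib]
      refine Finset.sum_congr rfl fun j _ => ?_
      rw [← Finset.sum_add_distrib]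
      refine Finset.sum_congr rfl fun k _ => ?_
      rw [← Finset.sum_add_distrib]
      exact Finset.sum_congr rfl fun l _ => by ring
    -- the two halves coincide by symmetry of K and W
    have hswapq : (∑ i ∈ S, ∑ j ∈ S, ∑ k ∈ S, ∑ l ∈ S,
            Δx j * Δx i * Δy k * Δy l *
              (K (j-i) (k-l) * (∑ m, (z m : ℝ) * deriv (c m i l) t) * ρ j k t
                + W (j-i) (k-l) * (∑ m, deriv (c m i l) t) * θ j k t))
        = (∑ i ∈ S, ∑ j ∈ S, ∑ k ∈ S, ∑ l ∈ S,
            Δx j * Δx i * Δy k * Δy l *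
              (K (j-i) (k-l) * ρ i l t * (∑ m, (z m : ℝ) * deriv (c m j k) t)
                + W (j-i) (k-l) * θ i l t * (∑ m, deriv (c m j k) t))) := by
      rw [swap_pairs S S (fun i j k l => Δx j * Δx i * Δy k * Δy l *
        (K (j-i) (k-l) * (∑ m, (z m : ℝ) * deriv (c m i l) t) * ρ j k t
          + W (j-i) (k-l) * (∑ m, deriv (c m i l) t) * θ j k t))]
      refine Finset.sum_congr rfl fun i _ => Finset.sum_congr rfl fun j _ =>
        Finset.sum_congr rfl fun k _ => Finset.sum_congr rfl fun l _ => ?_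
      have hK : K (i-j) (l-k) = K (j-i) (k-l) := by
        rw [hKsymm (i-j) (l-k)]; congr 1 <;> ring
      have hW : W (i-j) (l-k) = W (j-i) (k-l) := by
        rw [hWsymm (i-j) (l-k)]; congr 1 <;> ring
      rw [hK, hW]
      ring
    -- expansion of the ψ-sum
    have hphi : (∑ m, ∑ j ∈ S, ∑ k ∈ S, Δx j * Δy k * (ψ m j k t * deriv (c m j k) t))
        = (∑ m, ∑ j ∈ S, ∑ k ∈ S, Δx j * Δy k
            * ((1 + Real.log (c m j k t)) * deriv (c m j k) t))
          + ∑ m, ∑ j ∈ S, ∑ k ∈ S, ∑ i ∈ S, ∑ l ∈ S,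
              (Δx j * Δy k * deriv (c m j k) t)
                * (Δx i * Δy l * ((z m : ℝ) * K (j - i) (k - l) * ρ i l t
                    + W (j - i) (k - l) * θ i l t)) := by
      rw [← Finset.sum_add_distrib]
      refine Finset.sum_congr rfl fun m _ => ?_
      rw [← Finset.sum_add_distrib]
      refine Finset.sum_congr rfl fun j hj => ?_
      rw [← Finset.sum_add_distrib]
      refine Finset.sum_congr rfl fun k hk => ?_
      rw [hψ m j hj k hk t]
      simp only [← Finset.mul_sum]
      ring
    -- the interaction part matches the second half
    have hinter : (∑ m, ∑ j ∈ S, ∑ k ∈ S, ∑ i ∈ S, ∑ l ∈ S,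
              (Δx j * Δy k * deriv (c m j k) t)
                * (Δx i * Δy l * ((z m : ℝ) * K (j - i) (k - l) * ρ i l t
                    + W (j - i) (k - l) * θ i l t)))
        = (∑ i ∈ S, ∑ j ∈ S, ∑ k ∈ S, ∑ l ∈ S,
            Δx j * Δx i * Δy k * Δy l *
              (K (j-i) (k-l) * ρ i l t * (∑ m, (z m : ℝ) * deriv (c m j k) t)
                + W (j-i) (k-l) * θ i l t * (∑ m, deriv (c m j k) t))) := by
      rw [sum_comm3 Finset.univ S S]
      rw [sum_comm3 S S S (fun i j k => ∑ l ∈ S,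
            Δx j * Δx i * Δy k * Δy l *
              (K (j-i) (k-l) * ρ i l t * (∑ m, (z m : ℝ) * deriv (c m j k) t)
                + W (j-i) (k-l) * θ i l t * (∑ m, deriv (c m j k) t)))]
      refine Finset.sum_congr rfl fun j _ => Finset.sum_congr rfl fun k _ => ?_
      rw [sum_comm3 Finset.univ S S]
      refine Finset.sum_congr rfl fun i _ => Finset.sum_congr rfl fun l _ => ?_
      calc (∑ m, (Δx j * Δy k * deriv (c m j k) t)
                * (Δx i * Δy l * ((z m : ℝ) * K (j - i) (k - l) * ρ i l t
                    + W (j - i) (k - l) * θ i l t)))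
          = ∑ m, ((Δx j * Δx i * Δy k * Δy l * (K (j-i) (k-l) * ρ i l t))
                * ((z m : ℝ) * deriv (c m j k) t)
              + (Δx j * Δx i * Δy k * Δy l * (W (j-i) (k-l) * θ i l t))
                * deriv (c m j k) t) :=
            Finset.sum_congr rfl fun m _ => by ring
        _ = (Δx j * Δx i * Δy k * Δy l * (K (j-i) (k-l) * ρ i l t))
              * (∑ m, (z m : ℝ) * deriv (c m j k) t)
            + (Δx j * Δx i * Δy k * Δy l * (W (j-i) (k-l) * θ i l t))
              * (∑ m, deriv (c m j k) t) := by
            rw [Finset.sum_add_distrib, ← Finset.mul_sum, ← Finset.mul_sum]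
        _ = Δx j * Δx i * Δy k * Δy l *
              (K (j-i) (k-l) * ρ i l t * (∑ m, (z m : ℝ) * deriv (c m j k) t)
                + W (j-i) (k-l) * θ i l t * (∑ m, deriv (c m j k) t)) := by
            ring
    rw [hpart1, hsplitq, hswapq, hphi, hinter]
    ring
  have keyΦ : ∀ t, HasDerivAt E
      (∑ m, ∑ j ∈ S, ∑ k ∈ S, Δx j * Δy k * (ψ m j k t * deriv (c m j k) t)) t :=
    fun t => (hA1 t) ▸ key t
  have hdiffE : Differentiable ℝ E := fun t => (keyΦ t).differentiableAt
  refine ⟨hdiffE, fun t => ?_⟩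
  have hderivE : deriv E t
      = ∑ m, ∑ j ∈ S, ∑ k ∈ S, Δx j * Δy k * (ψ m j k t * deriv (c m j k) t) :=
    (keyΦ t).deriv
  -- summation by parts
  have hXY : (∑ m, ∑ j ∈ S, ∑ k ∈ S, Δx j * Δy k * (ψ m j k t * deriv (c m j k) t))
      = -(∑ m, ∑ k ∈ S, ∑ j ∈ S', Δy k * (Fx m j k t * (Δx j * u m j k t)))
        - (∑ m, ∑ j ∈ S, ∑ k ∈ S', Δx j * (Fy m j k t * (Δy k * v m j k t))) := by
    have step1 : (∑ m, ∑ j ∈ S, ∑ k ∈ S, Δx j * Δy k * (ψ m j k t * deriv (c m j k) t))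
        = ∑ m, ∑ j ∈ S, ∑ k ∈ S,
            (-(Δy k * (ψ m j k t * (Fx m j k t - Fx m (j - 1) k t)))
              + -(Δx j * (ψ m j k t * (Fy m j k t - Fy m j (k - 1) t)))) := by
      refine Finset.sum_congr rfl fun m _ => Finset.sum_congr rfl fun j hj =>
        Finset.sum_congr rfl fun k hk => ?_
      rw [hscheme m j hj k hk t]
      have hx := (hΔx j hj).ne'
      have hy := (hΔy k hk).ne'
      field_simp
      ring
    have step2 : (∑ m, ∑ j ∈ S, ∑ k ∈ S,
            (-(Δy k * (ψ m j k t * (Fx m j k t - Fx m (j - 1) k t)))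
              + -(Δx j * (ψ m j k t * (Fy m j k t - Fy m j (k - 1) t)))))
        = -(∑ m, ∑ j ∈ S, ∑ k ∈ S, Δy k * (ψ m j k t * (Fx m j k t - Fx m (j - 1) k t)))
          + -(∑ m, ∑ j ∈ S, ∑ k ∈ S,
              Δx j * (ψ m j k t * (Fy m j k t - Fy m j (k - 1) t))) := by
      simp only [Finset.sum_add_distrib, Finset.sum_neg_distrib]
    have hT1 : (∑ m, ∑ j ∈ S, ∑ k ∈ S, Δy k * (ψ m j k t * (Fx m j k t - Fx m (j - 1) k t)))
        = ∑ m, ∑ k ∈ S, ∑ j ∈ S', Δy k * (Fx m j k t * (Δx j * u m j k t)) := by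
      refine Finset.sum_congr rfl fun m _ => ?_
      rw [Finset.sum_comm]
      refine Finset.sum_congr rfl fun k hk => ?_
      calc (∑ j ∈ S, Δy k * (ψ m j k t * (Fx m j k t - Fx m (j - 1) k t)))
          = Δy k * ∑ j ∈ S, ψ m j k t * (Fx m j k t - Fx m (j - 1) k t) := by
            rw [Finset.mul_sum]
        _ = Δy k * ∑ j ∈ S', Fx m j k t * (ψ m j k t - ψ m (j + 1) k t) := by
            rw [hSdef, hS'def]
            rw [sbp N (fun j => ψ m j k t) (fun j => Fx m j k t) (hFxl m k t) (hFxr m k t)]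
        _ = ∑ j ∈ S', Δy k * (Fx m j k t * (Δx j * u m j k t)) := by
            rw [Finset.mul_sum]
            refine Finset.sum_congr rfl fun j hj => ?_
            have hueq : Δx j * u m j k t = ψ m j k t - ψ m (j + 1) k t := by
              rw [hu m j hj k hk t]
              have hx := (hΔx j (hsub hj)).ne'
              field_simp
              ring
            rw [hueq]
    have hT2 : (∑ m, ∑ j ∈ S, ∑ k ∈ S, Δx j * (ψ m j k t * (Fy m j k t - Fy m j (k - 1) t)))
        = ∑ m, ∑ j ∈ S, ∑ k ∈ S', Δx j * (Fy m j k t * (Δy k * v m j k t)) := by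
      refine Finset.sum_congr rfl fun m _ => Finset.sum_congr rfl fun j hj => ?_
      calc (∑ k ∈ S, Δx j * (ψ m j k t * (Fy m j k t - Fy m j (k - 1) t)))
          = Δx j * ∑ k ∈ S, ψ m j k t * (Fy m j k t - Fy m j (k - 1) t) := by
            rw [Finset.mul_sum]
        _ = Δx j * ∑ k ∈ S', Fy m j k t * (ψ m j k t - ψ m j (k + 1) t) := by
            rw [hSdef, hS'def]
            rw [sbp N (fun k => ψ m j k t) (fun k => Fy m j k t) (hFyl m j t) (hFyr m j t)]
        _ = ∑ k ∈ S', Δx j * (Fy m j k t * (Δy k * v m j k t)) := by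
            rw [Finset.mul_sum]
            refine Finset.sum_congr rfl fun k hk => ?_
            have hveq : Δy k * v m j k t = ψ m j k t - ψ m j (k + 1) t := by
              rw [hv m j hj k hk t]
              have hy := (hΔy k (hsub hk)).ne'
              field_simp
              ring
            rw [hveq]
    rw [step1, step2, hT1, hT2]
    ring
  -- lower bounds on dissipation pieces
  have hXge : (∑ m, ∑ j ∈ S', ∑ k ∈ S',
        Δx j * Δy k * (u m j k t) ^ 2
          * min (c m j k t) (min (c m (j + 1) k t) (c m j (k + 1) t)))
      ≤ ∑ m, ∑ k ∈ S, ∑ j ∈ S', Δy k * (Fx m j k t * (Δx j * u m j k t)) := by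
    have hxkey : ∀ m, ∀ j ∈ S', ∀ k ∈ S,
        Δx j * Δy k * ((u m j k t) ^ 2 * min (c m j k t) (c m (j + 1) k t))
          ≤ Δy k * (Fx m j k t * (Δx j * u m j k t)) := by
      intro m j hj k hk
      obtain ⟨hjS, hj1S⟩ := hS'S j hj
      rw [hFx m j hj k hk t]
      have h2 := upwind_lower (u m j k t) (c m j k t) (c m (j + 1) k t)
        (min (c m j k t) (c m (j + 1) k t)) le_rfl
      have hx := hΔx j hjS
      have hy := hΔy k hk
      nlinarith [mul_le_mul_of_nonneg_left h2 (le_of_lt (mul_pos hx hy))]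
    have hxnn : ∀ m, ∀ j ∈ S', ∀ k ∈ S,
        (0:ℝ) ≤ Δx j * Δy k * ((u m j k t) ^ 2 * min (c m j k t) (c m (j + 1) k t)) := by
      intro m j hj k hk
      obtain ⟨hjS, hj1S⟩ := hS'S j hj
      have h1 := hcpos m j hjS k hk t
      have h2 := hcpos m (j+1) hj1S k hk t
      have hx := hΔx j hjS
      have hy := hΔy k hk
      have : (0:ℝ) ≤ min (c m j k t) (c m (j + 1) k t) := le_min h1.le h2.le
      positivity
    refine Finset.sum_le_sum fun m _ => ?_
    calc (∑ j ∈ S', ∑ k ∈ S',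
        Δx j * Δy k * (u m j k t) ^ 2
          * min (c m j k t) (min (c m (j + 1) k t) (c m j (k + 1) t)))
        = ∑ k ∈ S', ∑ j ∈ S',
            Δx j * Δy k * (u m j k t) ^ 2
              * min (c m j k t) (min (c m (j + 1) k t) (c m j (k + 1) t)) :=
          Finset.sum_comm
      _ ≤ ∑ k ∈ S', ∑ j ∈ S',
            Δx j * Δy k * ((u m j k t) ^ 2 * min (c m j k t) (c m (j + 1) k t)) := by
          refine Finset.sum_le_sum fun k hk => Finset.sum_le_sum fun j hj => ?_
          obtain ⟨hjS, hj1S⟩ := hS'S j hj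
          have hm3 : min (c m j k t) (min (c m (j + 1) k t) (c m j (k + 1) t))
              ≤ min (c m j k t) (c m (j + 1) k t) :=
            le_min (min_le_left _ _) (le_trans (min_le_right _ _) (min_le_left _ _))
          have hx := hΔx j hjS
          have hy := hΔy k (hsub hk)
          nlinarith [mul_le_mul_of_nonneg_left hm3
            (mul_nonneg (le_of_lt (mul_pos hx hy)) (sq_nonneg (u m j k t)))]
      _ ≤ ∑ k ∈ S, ∑ j ∈ S',
            Δx j * Δy k * ((u m j k t) ^ 2 * min (c m j k t) (c m (j + 1) k t)) := by
          refine Finset.sum_le_sum_of_subset_of_nonneg hsub fun k hk _ => ?_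
          exact Finset.sum_nonneg fun j hj => hxnn m j hj k hk
      _ ≤ ∑ k ∈ S, ∑ j ∈ S', Δy k * (Fx m j k t * (Δx j * u m j k t)) :=
          Finset.sum_le_sum fun k hk => Finset.sum_le_sum fun j hj => hxkey m j hj k hk
  have hYge : (∑ m, ∑ j ∈ S', ∑ k ∈ S',
        Δx j * Δy k * (v m j k t) ^ 2
          * min (c m j k t) (min (c m (j + 1) k t) (c m j (k + 1) t)))
      ≤ ∑ m, ∑ j ∈ S, ∑ k ∈ S', Δx j * (Fy m j k t * (Δy k * v m j k t)) := by
    have hykey : ∀ m, ∀ j ∈ S, ∀ k ∈ S',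
        Δx j * Δy k * ((v m j k t) ^ 2 * min (c m j k t) (c m j (k + 1) t))
          ≤ Δx j * (Fy m j k t * (Δy k * v m j k t)) := by
      intro m j hj k hk
      obtain ⟨hkS, hk1S⟩ := hS'S k hk
      rw [hFy m j hj k hk t]
      have h2 := upwind_lower (v m j k t) (c m j k t) (c m j (k + 1) t)
        (min (c m j k t) (c m j (k + 1) t)) le_rfl
      have hx := hΔx j hj
      have hy := hΔy k hkS
      nlinarith [mul_le_mul_of_nonneg_left h2 (le_of_lt (mul_pos hx hy))]
    have hynn : ∀ m, ∀ j ∈ S, ∀ k ∈ S',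
        (0:ℝ) ≤ Δx j * Δy k * ((v m j k t) ^ 2 * min (c m j k t) (c m j (k + 1) t)) := by
      intro m j hj k hk
      obtain ⟨hkS, hk1S⟩ := hS'S k hk
      have h1 := hcpos m j hj k hkS t
      have h2 := hcpos m j hj (k+1) hk1S t
      have hx := hΔx j hj
      have hy := hΔy k hkS
      have : (0:ℝ) ≤ min (c m j k t) (c m j (k + 1) t) := le_min h1.le h2.le
      positivity
    refine Finset.sum_le_sum fun m _ => ?_
    calc (∑ j ∈ S', ∑ k ∈ S',
        Δx j * Δy k * (v m j k t) ^ 2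
          * min (c m j k t) (min (c m (j + 1) k t) (c m j (k + 1) t)))
        ≤ ∑ j ∈ S', ∑ k ∈ S',
            Δx j * Δy k * ((v m j k t) ^ 2 * min (c m j k t) (c m j (k + 1) t)) := by
          refine Finset.sum_le_sum fun j hj => Finset.sum_le_sum fun k hk => ?_
          obtain ⟨hjS, hj1S⟩ := hS'S j hj
          have hm3 : min (c m j k t) (min (c m (j + 1) k t) (c m j (k + 1) t))
              ≤ min (c m j k t) (c m j (k + 1) t) :=
            le_min (min_le_left _ _) (le_trans (min_le_right _ _) (min_le_right _ _))
          have hx := hΔx j hjS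
          have hy := hΔy k (hsub hk)
          nlinarith [mul_le_mul_of_nonneg_left hm3
            (mul_nonneg (le_of_lt (mul_pos hx hy)) (sq_nonneg (v m j k t)))]
      _ ≤ ∑ j ∈ S, ∑ k ∈ S',
            Δx j * Δy k * ((v m j k t) ^ 2 * min (c m j k t) (c m j (k + 1) t)) := by
          refine Finset.sum_le_sum_of_subset_of_nonneg hsub fun j hj _ => ?_
          exact Finset.sum_nonneg fun k hk => hynn m j hj k hk
      _ ≤ ∑ j ∈ S, ∑ k ∈ S', Δx j * (Fy m j k t * (Δy k * v m j k t)) :=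
          Finset.sum_le_sum fun j hj => Finset.sum_le_sum fun k hk => hykey m j hj k hk
  have hDsplit : D t = (∑ m, ∑ j ∈ S', ∑ k ∈ S',
        Δx j * Δy k * (u m j k t) ^ 2
          * min (c m j k t) (min (c m (j + 1) k t) (c m j (k + 1) t)))
      + (∑ m, ∑ j ∈ S', ∑ k ∈ S',
        Δx j * Δy k * (v m j k t) ^ 2
          * min (c m j k t) (min (c m (j + 1) k t) (c m j (k + 1) t))) := by
    rw [hD t, ← Finset.sum_add_distrib]
    refine Finset.sum_congr rfl fun m _ => ?_
    rw [← Finset.sum_add_distrib]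
    refine Finset.sum_congr rfl fun j _ => ?_
    rw [← Finset.sum_add_distrib]
    exact Finset.sum_congr rfl fun k _ => by ring
  have hDnn : 0 ≤ D t := by
    rw [hD t]
    refine Finset.sum_nonneg fun m _ => Finset.sum_nonneg fun j hj =>
      Finset.sum_nonneg fun k hk => ?_
    obtain ⟨hjS, hj1S⟩ := hS'S j hj
    obtain ⟨hkS, hk1S⟩ := hS'S k hk
    have h1 := hcpos m j hjS k hkS t
    have h2 := hcpos m (j+1) hj1S k hkS t
    have h3 := hcpos m j hjS (k+1) hk1S t
    have hx := hΔx j hjS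
    have hy := hΔy k hkS
    have hmn : (0:ℝ) ≤ min (c m j k t) (min (c m (j + 1) k t) (c m j (k + 1) t)) :=
      le_min h1.le (le_min h2.le h3.le)
    have hsq : (0:ℝ) ≤ (u m j k t) ^ 2 + (v m j k t) ^ 2 := by positivity
    positivity
  constructor
  · rw [hderivE, hXY]
    rw [hDsplit]
    linarith
  · linarith
end
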